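/- Let ε > 0 and let Z₁, Z₂ be independent real random variables on a probability space, each with law having density z ↦ (ε/2)·exp(−ε·|z|) with respect to Lebesgue measure. For every real x ≥ 0, P(Z₂ − Z₁ ≤ x) = 1 − (exp(−ε·x)/2)·(1 + ε·x/2). -/

import Mathlib

open MeasureTheory Real ProbabilityTheory

section
open Set Filter

namespace LapAux

/-- Laplace CDF. -/
noncomputable def F (ε t : ℝ) : ℝ :=
  if t ≤ 0 then Real.exp (ε * t) / 2 else 1 - Real.exp (-(ε * t)) / 2

lemma intOn_exp_Ioi {c : ℝ} (hc : 0 < c) (t : ℝ) :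
    IntegrableOn (fun z => Real.exp (-(c * z))) (Ioi t) := by
  simpa [neg_mul] using exp_neg_integrableOn_Ioi t hc

lemma integral_exp_Ioi {c : ℝ} (hc : 0 < c) (t : ℝ) :
    ∫ z in Ioi t, Real.exp (-(c * z)) = Real.exp (-(c * t)) / c := by
  have hderiv : ∀ z ∈ Ici t,
      HasDerivAt (fun z => -(Real.exp (-(c * z)) / c)) (Real.exp (-(c * z))) z := by
    intro z _
    have h1 : HasDerivAt (fun z : ℝ => -(c * z)) (-c) z := by
      simpa using (hasDerivAt_id z).const_mul (-c)
    have : HasDerivAt (fun z => -(Real.exp (-(c * z)) / c)) (-(Real.exp (-(c * z)) * -c / c)) z :=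
      (h1.exp.div_const c).neg
    convert this using 1
    field_simp
  have htend : Tendsto (fun z => -(Real.exp (-(c * z)) / c)) atTop (nhds 0) := by
    have h2 : Tendsto (fun z : ℝ => -(c * z)) atTop atBot :=
      tendsto_neg_atBot_iff.mpr ((tendsto_const_mul_atTop_of_pos hc).mpr tendsto_id)
    have h3 : Tendsto (fun z : ℝ => Real.exp (-(c * z))) atTop (nhds 0) :=
      Real.tendsto_exp_atBot.comp h2
    simpa using (h3.div_const c).neg
  have := integral_Ioi_of_hasDerivAt_of_tendsto' hderiv (intOn_exp_Ioi hc t) htend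
  rw [this]; ring

lemma intOn_comp_neg_Iic {f : ℝ → ℝ} {c : ℝ}
    (hf : IntegrableOn f (Ioi (-c))) : IntegrableOn (fun x => f (-x)) (Iic c) := by
  have A : MeasurableEmbedding (fun x : ℝ => -x) :=
    (Homeomorph.neg ℝ).isClosedEmbedding.measurableEmbedding
  have h1 : Measure.map (fun x : ℝ => -x) (volume.restrict (Iic c))
      = volume.restrict (Ici (-c)) := by
    have h0 : Iic c = (fun x : ℝ => -x) ⁻¹' (Ici (-c)) := by ext y; simp
    rw [h0, ← A.restrict_map, Measure.map_neg_eq_self]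
  have h2 : Integrable f (Measure.map (fun x : ℝ => -x) (volume.restrict (Iic c))) := by
    rw [h1]
    exact hf.congr_set_ae Ioi_ae_eq_Ici.symm |>.integrable
  exact A.integrable_map_iff.mp h2

lemma intOn_exp_Iic {c : ℝ} (hc : 0 < c) (t : ℝ) :
    IntegrableOn (fun z => Real.exp (c * z)) (Iic t) := by
  have := intOn_comp_neg_Iic (c := t) (intOn_exp_Ioi hc (-t))
  simpa [mul_neg] using this

lemma integral_exp_Iic {c : ℝ} (hc : 0 < c) (t : ℝ) :
    ∫ z in Iic t, Real.exp (c * z) = Real.exp (c * t) / c := by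
  have h := integral_comp_neg_Iic t (fun z => Real.exp (-(c * z)))
  simp only [mul_neg, neg_neg] at h
  rw [h, integral_exp_Ioi hc (-t)]
  ring_nf

noncomputable def f (ε z : ℝ) : ℝ := ε / 2 * Real.exp (-ε * |z|)

lemma f_nonneg (hε : 0 < ε) (z : ℝ) : 0 ≤ f ε z := by
  unfold f; positivity

lemma f_eq_left (hz : z ≤ 0) : f ε z = ε / 2 * Real.exp (ε * z) := by
  rw [f, abs_of_nonpos hz]; ring_nf

lemma f_eq_right (hz : 0 ≤ z) : f ε z = ε / 2 * Real.exp (-(ε * z)) := by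
  rw [f, abs_of_nonneg hz]; ring_nf

lemma intOn_f_Iic (hε : 0 < ε) (t : ℝ) (ht : t ≤ 0) : IntegrableOn (f ε) (Iic t) := by
  exact IntegrableOn.congr_fun ((intOn_exp_Iic hε t).const_mul (ε / 2))
    (fun z hz => (f_eq_left (le_trans hz ht)).symm) measurableSet_Iic

lemma intOn_f_Ioi (hε : 0 < ε) (t : ℝ) (ht : 0 ≤ t) : IntegrableOn (f ε) (Ioi t) := by
  exact IntegrableOn.congr_fun ((intOn_exp_Ioi hε t).const_mul (ε / 2))
    (fun z hz => (f_eq_right (le_of_lt (lt_of_le_of_lt ht hz))).symm) measurableSet_Ioi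

lemma int_f (hε : 0 < ε) : Integrable (f ε) := by
  have : (univ : Set ℝ) = Iic 0 ∪ Ioi 0 := (Iic_union_Ioi).symm
  rw [← integrableOn_univ, this]
  exact (intOn_f_Iic hε 0 le_rfl).union (intOn_f_Ioi hε 0 le_rfl)

lemma cdf_Iic (hε : 0 < ε) {t : ℝ} (ht : t ≤ 0) :
    ∫ z in Iic t, f ε z = Real.exp (ε * t) / 2 := by
  rw [setIntegral_congr_fun measurableSet_Iic
    (fun z (hz : z ≤ t) => f_eq_left (le_trans hz ht)),
    integral_const_mul, integral_exp_Iic hε t]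
  field_simp

lemma int_exp_Ioc (hε : 0 < ε) {a b : ℝ} (hab : a ≤ b) :
    ∫ z in Ioc a b, Real.exp (-(ε * z))
      = Real.exp (-(ε * a)) / ε - Real.exp (-(ε * b)) / ε := by
  have hu : Ioc a b ∪ Ioi b = Ioi a := Ioc_union_Ioi_eq_Ioi hab
  have h := setIntegral_union (Ioc_disjoint_Ioi le_rfl) measurableSet_Ioi
    ((intOn_exp_Ioi hε a).mono_set (hu ▸ subset_union_left))
    (intOn_exp_Ioi hε b) (f := fun z => Real.exp (-(ε * z)))
  rw [hu, integral_exp_Ioi hε a, integral_exp_Ioi hε b] at h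
  linarith

lemma cdf (hε : 0 < ε) (t : ℝ) : ∫ z in Iic t, f ε z = F ε t := by
  rcases le_or_gt t 0 with ht | ht
  · rw [cdf_Iic hε ht, F, if_pos ht]
  · have hu : Iic 0 ∪ Ioc 0 t = Iic t := Iic_union_Ioc_eq_Iic ht.le
    have hIoc : IntegrableOn (f ε) (Ioc 0 t) :=
      (intOn_f_Ioi hε 0 le_rfl).mono_set Ioc_subset_Ioi_self
    have h := setIntegral_union (Iic_disjoint_Ioc le_rfl) measurableSet_Ioc
      (intOn_f_Iic hε 0 le_rfl) hIoc (f := f ε)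
    rw [hu, cdf_Iic hε le_rfl] at h
    have h2 : ∫ z in Ioc 0 t, f ε z = (1 - Real.exp (-(ε * t))) / 2 := by
      rw [setIntegral_congr_fun measurableSet_Ioc
        (fun z hz => f_eq_right (le_of_lt hz.1)),
        integral_const_mul, int_exp_Ioc hε ht.le]
      field_simp
      simp
    rw [h2] at h
    rw [F, if_neg (not_le.mpr ht), h]
    simp
    ring

lemma F_nonneg (hε : 0 < ε) (t : ℝ) : 0 ≤ F ε t := by
  rw [F]; split_ifs with h
  · positivity
  · have := Real.exp_le_one_iff.mpr (by nlinarith : -(ε * t) ≤ 0)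
    linarith

lemma F_le_one (hε : 0 < ε) (t : ℝ) : F ε t ≤ 1 := by
  rw [F]; split_ifs with h
  · have := Real.exp_le_one_iff.mpr (by nlinarith : ε * t ≤ 0)
    linarith
  · have := Real.exp_pos (-(ε * t))
    linarith

lemma F_meas : Measurable (F ε) := by
  unfold F
  exact Measurable.ite (measurableSet_le measurable_id measurable_const)
    (by fun_prop) (by fun_prop)

lemma f_cont : Continuous (f ε) := by
  unfold f; fun_prop

lemma int_exp_Ioc_pos (hε : 0 < ε) {a b : ℝ} (hab : a ≤ b) :
    ∫ z in Ioc a b, Real.exp (ε * z)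
      = Real.exp (ε * b) / ε - Real.exp (ε * a) / ε := by
  have hu : Iic a ∪ Ioc a b = Iic b := Iic_union_Ioc_eq_Iic hab
  have h := setIntegral_union (Iic_disjoint_Ioc le_rfl) measurableSet_Ioc
    (intOn_exp_Iic hε a)
    ((intOn_exp_Iic hε b).mono_set (hu ▸ subset_union_right))
    (f := fun z => Real.exp (ε * z))
  rw [hu, integral_exp_Iic hε a, integral_exp_Iic hε b] at h
  linarith

variable {x : ℝ}

lemma g_int (hε : 0 < ε) (x : ℝ) :
    Integrable (fun z => f ε z * F ε (z + x)) := by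
  have hm : AEStronglyMeasurable (fun z => f ε z * F ε (z + x)) volume :=
    (f_cont.measurable.mul (F_meas.comp (measurable_id.add_const x))).aestronglyMeasurable
  refine (int_f hε).mono hm (ae_of_all _ fun z => ?_)
  rw [Real.norm_eq_abs, Real.norm_eq_abs, abs_of_nonneg (f_nonneg hε z),
    abs_of_nonneg (mul_nonneg (f_nonneg hε z) (F_nonneg hε _))]
  calc f ε z * F ε (z + x) ≤ f ε z * 1 :=
        mul_le_mul_of_nonneg_left (F_le_one hε _) (f_nonneg hε z)
    _ = f ε z := mul_one _

lemma pieceA (hε : 0 < ε) (hx : 0 ≤ x) :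
    ∫ z in Iic (-x), f ε z * F ε (z + x) = Real.exp (-(ε * x)) / 8 := by
  have hcong : ∀ z ∈ Iic (-x), f ε z * F ε (z + x)
      = ε / 4 * Real.exp (ε * x) * Real.exp (2 * ε * z) := by
    intro z hz
    have hz' : z ≤ -x := hz
    have hz0 : z ≤ 0 := le_trans hz' (by linarith)
    have hzx : z + x ≤ 0 := by linarith
    have key : Real.exp (ε * z) * Real.exp (ε * (z + x))
        = Real.exp (ε * x) * Real.exp (2 * ε * z) := by
      rw [← Real.exp_add, ← Real.exp_add]; exact congrArg Real.exp (by ring)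
    rw [f_eq_left hz0, F, if_pos hzx]
    linear_combination (ε / 4) * key
  rw [setIntegral_congr_fun measurableSet_Iic hcong, integral_const_mul,
    integral_exp_Iic (by linarith : (0:ℝ) < 2 * ε)]
  have key : Real.exp (ε * x) * Real.exp (2 * ε * -x) = Real.exp (-(ε * x)) := by
    rw [← Real.exp_add]; exact congrArg Real.exp (by ring)
  calc ε / 4 * Real.exp (ε * x) * (Real.exp (2 * ε * -x) / (2 * ε))
      = Real.exp (ε * x) * Real.exp (2 * ε * -x) * (ε / (4 * (2 * ε))) := by ring
    _ = Real.exp (-(ε * x)) * (ε / (8 * ε)) := by rw [key]; ring_nf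
    _ = Real.exp (-(ε * x)) / 8 := by
        field_simp

lemma pieceB (hε : 0 < ε) (hx : 0 ≤ x) :
    ∫ z in Ioc (-x) 0, f ε z * F ε (z + x)
      = 1 / 2 - Real.exp (-(ε * x)) / 2 - ε * x * Real.exp (-(ε * x)) / 4 := by
  have hcong : ∀ z ∈ Ioc (-x) (0:ℝ), f ε z * F ε (z + x)
      = ε / 2 * Real.exp (ε * z) - ε / 4 * Real.exp (-(ε * x)) := by
    intro z hz
    have hz0 : z ≤ 0 := hz.2
    have hlt : -x < z := hz.1
    have hzx : ¬ (z + x ≤ 0) := not_le.mpr (by linarith)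
    have key : Real.exp (ε * z) * Real.exp (-(ε * (z + x))) = Real.exp (-(ε * x)) := by
      rw [← Real.exp_add]; exact congrArg Real.exp (by ring)
    rw [f_eq_left hz0, F, if_neg hzx]
    linear_combination (-ε / 4) * key
  have hbase : IntegrableOn (fun z => ε / 2 * Real.exp (ε * z)) (Iic (0:ℝ)) volume :=
    (intOn_exp_Iic hε 0).const_mul (ε / 2)
  have hint1 : IntegrableOn (fun z => ε / 2 * Real.exp (ε * z)) (Ioc (-x) 0) :=
    hbase.mono_set Ioc_subset_Iic_self
  have hint2 : IntegrableOn (fun _ : ℝ => ε / 4 * Real.exp (-(ε * x))) (Ioc (-x) 0) :=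
    integrableOn_const measure_Ioc_lt_top.ne
  rw [setIntegral_congr_fun measurableSet_Ioc hcong, integral_sub hint1 hint2,
    integral_const_mul, int_exp_Ioc_pos hε (by linarith : -x ≤ (0:ℝ)),
    setIntegral_const]
  rw [measureReal_def, Real.volume_Ioc, show (0:ℝ) - -x = x by ring, ENNReal.toReal_ofReal hx]
  rw [mul_zero, Real.exp_zero, show ε * -x = -(ε * x) by ring]
  field_simp
  ring

lemma pieceC (hε : 0 < ε) (hx : 0 ≤ x) :
    ∫ z in Ioi 0, f ε z * F ε (z + x)
      = 1 / 2 - Real.exp (-(ε * x)) / 8 := by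
  have hcong : ∀ z ∈ Ioi (0:ℝ), f ε z * F ε (z + x)
      = ε / 2 * Real.exp (-(ε * z)) - ε / 4 * Real.exp (-(ε * x)) * Real.exp (-(2 * ε * z)) := by
    intro z hz
    have hz0 : (0:ℝ) ≤ z := le_of_lt hz
    have hlt : (0:ℝ) < z := hz
    have hzx : ¬ (z + x ≤ 0) := not_le.mpr (by linarith)
    have key : Real.exp (-(ε * z)) * Real.exp (-(ε * (z + x)))
        = Real.exp (-(ε * x)) * Real.exp (-(2 * ε * z)) := by
      rw [← Real.exp_add, ← Real.exp_add]; exact congrArg Real.exp (by ring)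
    rw [f_eq_right hz0, F, if_neg hzx]
    linear_combination (-ε / 4) * key
  have hint1 : IntegrableOn (fun z => ε / 2 * Real.exp (-(ε * z))) (Ioi 0) :=
    (intOn_exp_Ioi hε 0).const_mul (ε / 2)
  have hint2 : IntegrableOn
      (fun z => ε / 4 * Real.exp (-(ε * x)) * Real.exp (-(2 * ε * z))) (Ioi 0) :=
    (intOn_exp_Ioi (by linarith : (0:ℝ) < 2 * ε) 0).const_mul _
  rw [setIntegral_congr_fun measurableSet_Ioi hcong, integral_sub hint1 hint2,
    integral_const_mul, integral_const_mul, integral_exp_Ioi hε 0,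
    integral_exp_Ioi (by linarith : (0:ℝ) < 2 * ε) 0]
  simp only [mul_zero, neg_zero, Real.exp_zero]
  field_simp
  ring

lemma g_integral (hε : 0 < ε) (hx : 0 ≤ x) :
    ∫ z, f ε z * F ε (z + x)
      = 1 - Real.exp (-(ε * x)) / 2 * (1 + ε * x / 2) := by
  have hg := g_int hε (x := x)
  have hu1 : Iic (-x) ∪ Ioc (-x) 0 = Iic 0 := Iic_union_Ioc_eq_Iic (by linarith)
  have hu2 : Iic (0:ℝ) ∪ Ioi 0 = (univ : Set ℝ) := Iic_union_Ioi
  have h2 := setIntegral_union (μ := volume) (s := Iic (0:ℝ)) (t := Ioi (0:ℝ))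
    (Iic_disjoint_Ioi le_rfl) measurableSet_Ioi
    hg.integrableOn hg.integrableOn (f := fun z => f ε z * F ε (z + x))
  have h1 := setIntegral_union (μ := volume) (s := Iic (-x)) (t := Ioc (-x) (0:ℝ))
    (Iic_disjoint_Ioc le_rfl) measurableSet_Ioc
    hg.integrableOn hg.integrableOn (f := fun z => f ε z * F ε (z + x))
  rw [hu2, setIntegral_univ] at h2
  rw [hu1] at h1
  rw [h2, h1, pieceA hε hx, pieceB hε hx, pieceC hε hx]
  ring

end LapAux

end

open LapAux Set in
/-- For independent Laplace(0, 1/ε) random variables `Z₁, Z₂`, and `x ≥ 0`,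
`P(Z₂ − Z₁ ≤ x) = 1 − (exp(−ε·x)/2)·(1 + ε·x/2)`. -/
theorem prob_laplace_diff_le {Ω : Type*} [MeasurableSpace Ω]
    (P : Measure Ω) [IsProbabilityMeasure P]
    (ε : ℝ) (hε : 0 < ε) (Z₁ Z₂ : Ω → ℝ)
    (hZ₁ : Measurable Z₁) (hZ₂ : Measurable Z₂)
    (hindep : IndepFun Z₁ Z₂ P)
    (hlaw₁ : Measure.map Z₁ P =
      volume.withDensity (fun z => ENNReal.ofReal (ε / 2 * Real.exp (-ε * |z|))))
    (hlaw₂ : Measure.map Z₂ P =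
      volume.withDensity (fun z => ENNReal.ofReal (ε / 2 * Real.exp (-ε * |z|))))
    (x : ℝ) (hx : 0 ≤ x) :
    P {ω | Z₂ ω - Z₁ ω ≤ x} =
      ENNReal.ofReal (1 - Real.exp (-ε * x) / 2 * (1 + ε * x / 2)) := by
  have hfμ : Measurable fun z : ℝ => ENNReal.ofReal (LapAux.f ε z) :=
    (f_cont (ε := ε)).measurable.ennreal_ofReal
  have hfeq : (fun z : ℝ => ENNReal.ofReal (ε / 2 * Real.exp (-ε * |z|)))
      = fun z => ENNReal.ofReal (LapAux.f ε z) := rfl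
  rw [hfeq] at hlaw₁ hlaw₂
  have hμprob : IsProbabilityMeasure
      (volume.withDensity fun z => ENNReal.ofReal (LapAux.f ε z)) := by
    rw [← hlaw₁]; exact Measure.isProbabilityMeasure_map hZ₁.aemeasurable
  have hprodmap : Measure.map (fun ω => (Z₁ ω, Z₂ ω)) P
      = (volume.withDensity fun z => ENNReal.ofReal (LapAux.f ε z)).prod
        (volume.withDensity fun z => ENNReal.ofReal (LapAux.f ε z)) := by
    rw [(indepFun_iff_map_prod_eq_prod_map_map hZ₁.aemeasurable hZ₂.aemeasurable).mp hindep,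
      hlaw₁, hlaw₂]
  have hS : MeasurableSet {p : ℝ × ℝ | p.2 - p.1 ≤ x} :=
    measurableSet_le (measurable_snd.sub measurable_fst) measurable_const
  have h1 : P {ω | Z₂ ω - Z₁ ω ≤ x}
      = ((volume.withDensity fun z => ENNReal.ofReal (LapAux.f ε z)).prod
        (volume.withDensity fun z => ENNReal.ofReal (LapAux.f ε z)))
        {p : ℝ × ℝ | p.2 - p.1 ≤ x} := by
    rw [← hprodmap, Measure.map_apply (hZ₁.prodMk hZ₂) hS]; rfl
  rw [h1, Measure.prod_apply hS]
  have h3 : ∀ z₁ : ℝ, (volume.withDensity fun z => ENNReal.ofReal (LapAux.f ε z))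
      (Prod.mk z₁ ⁻¹' {p : ℝ × ℝ | p.2 - p.1 ≤ x})
      = ENNReal.ofReal (F ε (z₁ + x)) := by
    intro z₁
    have h2 : (Prod.mk z₁ ⁻¹' {p : ℝ × ℝ | p.2 - p.1 ≤ x}) = Iic (z₁ + x) := by
      ext z₂; simp [sub_le_iff_le_add, add_comm]
    rw [h2, withDensity_apply _ measurableSet_Iic,
      ← ofReal_integral_eq_lintegral_ofReal (int_f hε).integrableOn
        (ae_of_all _ fun z => f_nonneg hε z),
      cdf hε]
  simp_rw [h3]
  have hFm : Measurable fun z : ℝ => ENNReal.ofReal (F ε (z + x)) :=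
    Measurable.ennreal_ofReal (F_meas.comp (measurable_add_const x))
  rw [lintegral_withDensity_eq_lintegral_mul _ hfμ hFm]
  have h4 : ∀ z : ℝ, ((fun z => ENNReal.ofReal (LapAux.f ε z))
        * fun z => ENNReal.ofReal (F ε (z + x))) z
      = ENNReal.ofReal (LapAux.f ε z * F ε (z + x)) := fun z => by
    simp only [Pi.mul_apply]
    exact (ENNReal.ofReal_mul (f_nonneg hε z)).symm
  simp_rw [h4]
  rw [← ofReal_integral_eq_lintegral_ofReal (g_int hε x)
    (ae_of_all _ fun z => mul_nonneg (f_nonneg hε z) (F_nonneg hε _))]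
  rw [g_integral hε hx, neg_mul]
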